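/- Let d, m ≥ 1 and divide [2dm] into 2m intervals J₁,...,J_{2m} of size d; label elements of J_k from 1 to d if k is odd and from d down to 1 if k is even, and let A_i be the set of elements labelled i. A non-crossing partition π of [2dm] with blocks of even cardinality belongs to NC*(d,m) (meaning: any two cyclically consecutive elements of a block lie in intervals J_k of different parity) if and only if π is finer than the partition {A₁,...,A_d}, i.e. every block of π is contained in a single label class A_i. -/

import Mathlib

open Classical

/-- `i` and `j` lie in the same block of the partition `P`. -/
def SameBlock {N : ℕ} (P : Finpartition (Finset.univ : Finset (Fin N))) (i j : Fin N) : Prop :=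
  ∃ b ∈ P.parts, i ∈ b ∧ j ∈ b

/-- A partition of `[N]` is non-crossing if for `i < j < k < l`, `i ∼ k` and `j ∼ l`
imply `i ∼ j` (equivalent for the linear and the cyclic order). -/
def IsNonCrossing {N : ℕ} (P : Finpartition (Finset.univ : Finset (Fin N))) : Prop :=
  ∀ i j k l : Fin N, i < j → j < k → k < l →
    SameBlock P i k → SameBlock P j l → SameBlock P i j

/-- `l` is the cyclic successor of `k` inside `B`: either `B = {k}` and `l = k`, or
`l ∈ B \ {k}` minimizes the cyclic distance `(x − k) mod N` over `x ∈ B \ {k}`; thus no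
other element of the block lies cyclically strictly between `k` and `l`. -/
def IsCyclicSuccIn {N : ℕ} (B : Finset (Fin N)) (k l : Fin N) : Prop :=
  k ∈ B ∧ l ∈ B ∧
    ((B = {k} ∧ l = k) ∨
      (l ≠ k ∧ ∀ x ∈ B, x ≠ k → (l - k).val ≤ (x - k).val))

/-- The (0-based) label of the 0-indexed element `j` of `[2dm]`: the intervals
`J_k` have size `d`; elements are labelled `0,...,d−1` on the even-indexed (0-based)
intervals and `d−1,...,0` on the odd-indexed ones. -/
def label (d j : ℕ) : ℕ :=
  if (j / d) % 2 = 0 then j % d else d - 1 - j % d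

def stepN (d n : ℕ) : ℤ := if (n / d) % 2 = 0 then 1 else -1

/-- the sawtooth height. -/
def phiN (d n : ℕ) : ℤ := if (n / d) % 2 = 0 then ((n % d : ℕ) : ℤ) else (d : ℤ) - ((n % d : ℕ) : ℤ)

lemma div_mod_aux (d q r : ℕ) (hd : 0 < d) (hr : r < d) :
    (d * q + r) / d = q ∧ (d * q + r) % d = r := by
  constructor
  · rw [Nat.mul_add_div hd, Nat.div_eq_of_lt hr, Nat.add_zero]
  · rw [Nat.mul_add_mod, Nat.mod_eq_of_lt hr]

lemma phiN_succ (d : ℕ) (hd : 0 < d) (n : ℕ) : phiN d (n + 1) = phiN d n + stepN d n := by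
  obtain ⟨q, r, hr, rfl⟩ : ∃ q r, r < d ∧ n = d * q + r :=
    ⟨n / d, n % d, Nat.mod_lt _ hd, (Nat.div_add_mod n d).symm⟩
  obtain ⟨hq, hrm⟩ := div_mod_aux d q r hd hr
  rcases Nat.lt_or_ge (r + 1) d with h | h
  · obtain ⟨hq1, hr1⟩ := div_mod_aux d q (r+1) hd h
    unfold phiN stepN
    rw [show d * q + r + 1 = d * q + (r+1) from rfl, hq1, hr1, hq, hrm]
    by_cases h2 : q % 2 = 0 <;> simp [h2] <;> push_cast <;> omega
  · have hrd : r + 1 = d := by omega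
    have : d * q + r + 1 = d * (q + 1) + 0 := by rw [Nat.mul_add, Nat.mul_one]; omega
    obtain ⟨hq1, hr1⟩ := div_mod_aux d (q+1) 0 hd hd
    unfold phiN stepN
    rw [this, hq1, hr1, hq, hrm]
    rcases Nat.eq_zero_or_pos (q % 2) with h2 | h2
    · have : (q+1) % 2 = 1 := by omega
      simp [h2, this]; omega
    · have h2' : q % 2 = 1 := by omega
      have : (q+1) % 2 = 0 := by omega
      simp [h2', this]; omega

lemma phiN_period (d m : ℕ) (hd : 0 < d) (n : ℕ) :
    phiN d (n + 2 * d * m) = phiN d n := by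
  have h1 : (n + 2*d*m) / d = n / d + 2 * m := by
    rw [show 2*d*m = d * (2*m) by ring, Nat.add_mul_div_left _ _ hd]
  have h2 : (n + 2*d*m) % d = n % d := by
    rw [show 2*d*m = d * (2*m) by ring, Nat.add_mul_mod_self_left]
  unfold phiN
  rw [h1, h2, Nat.add_mul_mod_self_left]

lemma stepN_period (d m : ℕ) (hd : 0 < d) (n : ℕ) :
    stepN d (n + 2 * d * m) = stepN d n := by
  have h1 : (n + 2*d*m) / d = n / d + 2 * m := by
    rw [show 2*d*m = d * (2*m) by ring, Nat.add_mul_div_left _ _ hd]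
  unfold stepN
  rw [h1, Nat.add_mul_mod_self_left]

lemma telescope (d : ℕ) (hd : 0 < d) (a b : ℕ) (h : a ≤ b) :
    ∑ x ∈ Finset.Ico a b, stepN d x = phiN d b - phiN d a := by
  induction b with
  | zero => simp [Nat.le_zero.mp h]
  | succ b ih =>
    rcases Nat.lt_or_ge a (b+1) with h' | h'
    · have hab : a ≤ b := by omega
      rw [Finset.sum_Ico_succ_top hab, ih hab, phiN_succ d hd b]; ring
    · have : a = b + 1 := by omega
      subst this; simp

lemma subval_of_le {N : ℕ} (a b : Fin N) (h : b.val ≤ a.val) :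
    (a - b).val = a.val - b.val := by
  rw [Fin.sub_def]
  simp only
  have hb := b.isLt
  have ha := a.isLt
  have : N - b.val + a.val = (a.val - b.val) + N := by omega
  rw [this, Nat.add_mod_right, Nat.mod_eq_of_lt (by omega)]

lemma subval_of_gt {N : ℕ} (a b : Fin N) (h : a.val < b.val) :
    (a - b).val = a.val + N - b.val := by
  rw [Fin.sub_def]
  simp only
  have hb := b.isLt
  have : N - b.val + a.val = a.val + N - b.val := by omega
  rw [this, Nat.mod_eq_of_lt (by omega)]

lemma subval_cases {N : ℕ} (a b : Fin N) :
    (b.val ≤ a.val ∧ (a - b).val = a.val - b.val) ∨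
      (a.val < b.val ∧ (a - b).val = a.val + N - b.val) := by
  rcases Nat.lt_or_ge a.val b.val with h | h
  · exact Or.inr ⟨h, subval_of_gt a b h⟩
  · exact Or.inl ⟨h, subval_of_le a b h⟩

lemma succ_injOn {N : ℕ} {B : Finset (Fin N)} (hB : ∀ x : Fin N, B ≠ {x})
    {x₁ x₂ w : Fin N} (h1 : IsCyclicSuccIn B x₁ w) (h2 : IsCyclicSuccIn B x₂ w) :
    x₁ = x₂ := by
  obtain ⟨hx₁, hw, h1⟩ := h1
  obtain ⟨hx₂, -, h2⟩ := h2
  rcases h1 with ⟨h, -⟩ | ⟨hne1, hmin1⟩; · exact absurd h (hB x₁)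
  rcases h2 with ⟨h, -⟩ | ⟨hne2, hmin2⟩; · exact absurd h (hB x₂)
  by_contra hne
  have hne' : x₂ ≠ x₁ := fun h => hne h.symm
  have e1 := hmin1 x₂ hx₂ hne'
  have e2 := hmin2 x₁ hx₁ (fun h => hne h)
  have hv1 : w.val ≠ x₁.val := fun h => hne1 (Fin.val_injective h)
  have hv2 : w.val ≠ x₂.val := fun h => hne2 (Fin.val_injective h)
  have hv3 : x₁.val ≠ x₂.val := fun h => hne (Fin.val_injective h)
  rcases subval_cases w x₁ with ⟨c1, e1'⟩ | ⟨c1, e1'⟩ <;>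
  rcases subval_cases w x₂ with ⟨c2, e2'⟩ | ⟨c2, e2'⟩ <;>
  rcases subval_cases x₂ x₁ with ⟨c3, e3'⟩ | ⟨c3, e3'⟩ <;>
  rcases subval_cases x₁ x₂ with ⟨c4, e4'⟩ | ⟨c4, e4'⟩ <;>
    rw [e1', e3'] at e1 <;> rw [e2', e4'] at e2 <;> omega
lemma blocksum {N d : ℕ} (b : Finset (Fin N)) (g : Fin N → Fin N)
    (hg : ∀ x ∈ b, g x ∈ b) (hinj : ∀ x ∈ b, ∀ y ∈ b, g x = g y → x = y)
    (x₀ : Fin N)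
    (hflip : ∀ x ∈ b, x ≠ x₀ → ((g x).val / d) % 2 ≠ (x.val / d) % 2)
    (hcard : Even b.card) :
    ∑ x ∈ b, stepN d x.val = 0 := by
  classical
  have hp2 : ∀ x : Fin N, (x.val / d) % 2 = 0 ∨ (x.val / d) % 2 = 1 := by intro x; omega
  -- full flip
  have hflip0 : ∀ x ∈ b, ((g x).val / d) % 2 ≠ (x.val / d) % 2 := by
    intro x hx
    rcases eq_or_ne x x₀ with rfl | hne
    swap
    · exact hflip x hx hne
    -- x = x₀ case
    by_contra hsame
    set S := b.filter (fun y => (y.val / d) % 2 = (x.val / d) % 2) with hS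
    set T := b.filter (fun y => (y.val / d) % 2 ≠ (x.val / d) % 2) with hT
    have hST : S.card + T.card = b.card := Finset.card_filter_add_card_filter_not _
    have hgT : ∀ y ∈ T, g y ∈ S := by
      intro y hy
      rw [hT, Finset.mem_filter] at hy
      obtain ⟨hyb, hyp⟩ := hy
      have hyx : y ≠ x := fun h => hyp (by rw [h])
      have := hflip y hyb hyx
      rw [hS, Finset.mem_filter]
      refine ⟨hg y hyb, ?_⟩
      rcases hp2 y with h | h <;> rcases hp2 (g y) with h' | h' <;>
        rcases hp2 x with h'' | h'' <;> omega
    have hTS : T.card ≤ S.card := by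
      apply Finset.card_le_card_of_injOn g hgT
      intro a ha b' hb' hab
      exact hinj a (Finset.mem_of_mem_filter _ ha) b' (Finset.mem_of_mem_filter _ hb') hab
    have hxS : x ∈ S := by rw [hS, Finset.mem_filter]; exact ⟨hx, rfl⟩
    have hST2 : S.card ≤ T.card + 1 := by
      have : (S.erase x).card ≤ T.card := by
        apply Finset.card_le_card_of_injOn g
        · intro y hy
          obtain ⟨hyx, hyS⟩ := Finset.mem_erase.mp hy
          rw [hS, Finset.mem_filter] at hyS
          have := hflip y hyS.1 hyx
          rw [hT, Finset.mem_coe, Finset.mem_filter]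
          refine ⟨hg y hyS.1, ?_⟩
          rcases hp2 y with h | h <;> rcases hp2 (g y) with h' | h' <;>
            rcases hp2 x with h'' | h'' <;> omega
        · intro a ha b' hb' hab
          have ha' := Finset.mem_of_mem_filter _ (Finset.mem_of_mem_erase ha)
          have hb'' := Finset.mem_of_mem_filter _ (Finset.mem_of_mem_erase hb')
          exact hinj a ha' b' hb'' hab
      have := Finset.card_erase_of_mem hxS
      omega
    have hSeqT : S.card = T.card := by
      rcases hcard with ⟨c, hc⟩
      omega
    have himg : T.image g = S := by
      apply Finset.eq_of_subset_of_card_le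
      · intro y hy
        obtain ⟨z, hz, rfl⟩ := Finset.mem_image.mp hy
        exact hgT z hz
      · rw [Finset.card_image_of_injOn]
        · omega
        · intro a ha b' hb' hab
          exact hinj a (Finset.mem_of_mem_filter _ ha) b' (Finset.mem_of_mem_filter _ hb') hab
    have hgxS : g x ∈ S := by rw [hS, Finset.mem_filter]; exact ⟨hg x hx, hsame⟩
    rw [← himg] at hgxS
    obtain ⟨w, hw, hgw⟩ := Finset.mem_image.mp hgxS
    have : x = w := hinj x hx w (Finset.mem_of_mem_filter _ hw) hgw.symm
    rw [hT, Finset.mem_filter] at hw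
    exact hw.2 (by rw [← this])
  -- equal cardinalities
  set P0 := b.filter (fun y => (y.val / d) % 2 = 0) with hP0
  set P1 := b.filter (fun y => ¬ ((y.val / d) % 2 = 0)) with hP1
  have hcards : P0.card = P1.card := by
    have h01 : P0.card ≤ P1.card := by
      apply Finset.card_le_card_of_injOn g
      · intro y hy
        rw [hP0, Finset.mem_coe, Finset.mem_filter] at hy
        rw [hP1, Finset.mem_coe, Finset.mem_filter]
        exact ⟨hg y hy.1, fun h => hflip0 y hy.1 (by omega)⟩
      · intro a ha b' hb' hab
        exact hinj a (Finset.mem_of_mem_filter _ ha) b' (Finset.mem_of_mem_filter _ hb') hab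
    have h10 : P1.card ≤ P0.card := by
      apply Finset.card_le_card_of_injOn g
      · intro y hy
        rw [hP1, Finset.mem_coe, Finset.mem_filter] at hy
        rw [hP0, Finset.mem_coe, Finset.mem_filter]
        refine ⟨hg y hy.1, ?_⟩
        have := hflip0 y hy.1
        rcases hp2 y with h | h <;> rcases hp2 (g y) with h' | h' <;> omega
      · intro a ha b' hb' hab
        exact hinj a (Finset.mem_of_mem_filter _ ha) b' (Finset.mem_of_mem_filter _ hb') hab
    omega
  -- conclude
  have hsplit := Finset.sum_filter_add_sum_filter_not b (fun y => (y.val / d) % 2 = 0) (fun x => stepN d x.val)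
  have h0 : ∑ x ∈ P0, stepN d x.val = P0.card := by
    rw [Finset.sum_congr rfl (fun x hx => ?_)]
    · rw [Finset.sum_const, nsmul_eq_mul, mul_one]
    · rw [hP0, Finset.mem_filter] at hx
      show stepN d x.val = 1
      unfold stepN
      rw [if_pos hx.2]
  have h1 : ∑ x ∈ P1, stepN d x.val = -P1.card := by
    rw [Finset.sum_congr rfl (fun x hx => ?_), Finset.sum_const, nsmul_eq_mul, mul_neg_one]
    rw [hP1, Finset.mem_filter] at hx
    show stepN d x.val = -1
    unfold stepN
    rw [if_neg hx.2]
  rw [← hsplit]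
  rw [show (b.filter (fun y => (y.val / d) % 2 = 0)) = P0 from rfl, show (b.filter (fun y => ¬ ((y.val / d) % 2 = 0))) = P1 from rfl, h0, h1, hcards]
  ring
lemma u_inj {N : ℕ} {i p q : Fin N} (h : (p - i).val = (q - i).val) : p = q := by
  apply Fin.val_injective
  have hp := p.isLt; have hq := q.isLt; have hi := i.isLt
  rcases subval_cases p i with ⟨c1, e1⟩ | ⟨c1, e1⟩ <;>
    rcases subval_cases q i with ⟨c2, e2⟩ | ⟨c2, e2⟩ <;> omega

lemma u_zero {N : ℕ} {i p : Fin N} (h : (p - i).val = 0) : p = i := by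
  apply Fin.val_injective
  have hp := p.isLt; have hi := i.isLt
  rcases subval_cases p i with ⟨c1, e1⟩ | ⟨c1, e1⟩ <;> omega

lemma u_diff {N : ℕ} {i p q : Fin N} (h : (q - i).val < (p - i).val) :
    (p - q).val = (p - i).val - (q - i).val := by
  have hp := p.isLt; have hq := q.isLt; have hi := i.isLt
  rcases subval_cases p i with ⟨c1, e1⟩ | ⟨c1, e1⟩ <;>
    rcases subval_cases q i with ⟨c2, e2⟩ | ⟨c2, e2⟩ <;>
      rcases subval_cases p q with ⟨c3, e3⟩ | ⟨c3, e3⟩ <;> omega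

/-- no block crosses the gap between `i` and its cyclic successor `l`. -/
lemma gap_blocks {N : ℕ} {π : Finpartition (Finset.univ : Finset (Fin N))}
    (hnc : IsNonCrossing π) {b : Finset (Fin N)} (hb : b ∈ π.parts)
    {i l : Fin N} (hib : i ∈ b) (hlb : l ∈ b)
    (hmin : ∀ x ∈ b, x ≠ i → (l - i).val ≤ (x - i).val)
    {b' : Finset (Fin N)} (hb' : b' ∈ π.parts)
    {x : Fin N} (hx : x ∈ b') (hx0 : 0 < (x - i).val) (hxl : (x - i).val < (l - i).val) :
    ∀ y ∈ b', 0 < (y - i).val ∧ (y - i).val < (l - i).val := by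
  have hxi : x ≠ i := fun h => by subst h; rw [subval_of_le x x (le_refl _)] at hx0; omega
  have hxb : x ∉ b := fun h => absurd (hmin x h hxi) (by omega)
  intro y hy
  by_contra hcon
  -- reduce to: (y - i).val > (l - i).val, or y = i / y = l cases
  have hyi : (y - i).val = 0 → False := by
    intro h
    have : y = i := u_zero h
    subst this
    exact hxb (by rwa [π.eq_of_mem_parts hb' hb hy hib] at hx)
  have hyl : (y - i).val = (l - i).val → False := by
    intro h
    have : y = l := u_inj h
    subst this
    exact hxb (by rwa [π.eq_of_mem_parts hb' hb hy hlb] at hx)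
  have hygt : (l - i).val < (y - i).val := by
    rcases Nat.lt_trichotomy (y - i).val (l - i).val with h | h | h
    · exfalso
      rcases Nat.eq_zero_or_pos (y - i).val with h0 | h0
      · exact hyi h0
      · exact hcon ⟨h0, h⟩
    · exact absurd h (fun hh => hyl hh)
    · exact h
  clear hcon hyi hyl
  -- now the crossing argument
  have sb_il : SameBlock π i l := ⟨b, hb, hib, hlb⟩
  have sb_li : SameBlock π l i := ⟨b, hb, hlb, hib⟩
  have sb_xy : SameBlock π x y := ⟨b', hb', hx, hy⟩
  have sb_yx : SameBlock π y x := ⟨b', hb', hy, hx⟩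
  have hI := i.isLt; have hL := l.isLt; have hX := x.isLt; have hY := y.isLt
  have hxl' : (x - i).val < (l - i).val := hxl
  -- final contradiction helper
  have finish : x ∈ b → False := fun h => absurd (hmin x h hxi) (by omega)
  have finishy : y ∈ b → False := by
    intro h
    have : b' = b := π.eq_of_mem_parts hb' hb hy h
    exact hxb (this ▸ hx)
  rcases subval_cases x i with ⟨cx, ex⟩ | ⟨cx, ex⟩ <;>
    rcases subval_cases l i with ⟨cl, el⟩ | ⟨cl, el⟩ <;>
      rcases subval_cases y i with ⟨cy, ey⟩ | ⟨cy, ey⟩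
  · -- i ≤ x, i ≤ l, i ≤ y : i < x < l < y
    obtain ⟨c, hc, hic, hxc⟩ :=
      hnc i x l y (Fin.lt_def.mpr (by omega)) (Fin.lt_def.mpr (by omega))
        (Fin.lt_def.mpr (by omega)) sb_il sb_xy
    exact finish (by rwa [π.eq_of_mem_parts hc hb hic hib] at hxc)
  · -- i ≤ x, i ≤ l, y < i : y < i < x < l
    obtain ⟨c, hc, hyc, hic⟩ :=
      hnc y i x l (Fin.lt_def.mpr (by omega)) (Fin.lt_def.mpr (by omega))
        (Fin.lt_def.mpr (by omega)) sb_yx sb_il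
    exact finishy (by rwa [π.eq_of_mem_parts hc hb hic hib] at hyc)
  · -- i ≤ x, l < i, i ≤ y : impossible (u l < u y fails)
    omega
  · -- i ≤ x, l < i, y < i : l < y < i < x
    obtain ⟨c, hc, hlc, hyc⟩ :=
      hnc l y i x (Fin.lt_def.mpr (by omega)) (Fin.lt_def.mpr (by omega))
        (Fin.lt_def.mpr (by omega)) sb_li sb_yx
    exact finishy (by rwa [π.eq_of_mem_parts hc hb hlc hlb] at hyc)
  · -- x < i, i ≤ l : impossible (u x < u l fails)
    omega
  · omega
  · -- x < i, l < i, i ≤ y : impossible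
    omega
  · -- x < i, l < i, y < i : x < l < y < i
    obtain ⟨c, hc, hxc, hlc⟩ :=
      hnc x l y i (Fin.lt_def.mpr (by omega)) (Fin.lt_def.mpr (by omega))
        (Fin.lt_def.mpr (by omega)) sb_xy sb_li
    exact finish (by rwa [π.eq_of_mem_parts hc hb hlc hlb] at hxc)

lemma gap_sum {N d m : ℕ} (hd : 0 < d) (hN : N = 2 * d * m)
    {π : Finpartition (Finset.univ : Finset (Fin N))}
    (hnc : IsNonCrossing π) {b : Finset (Fin N)} (hb : b ∈ π.parts)
    {i l : Fin N} (hib : i ∈ b) (hlb : l ∈ b) (hli : l ≠ i)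
    (hmin : ∀ x ∈ b, x ≠ i → (l - i).val ≤ (x - i).val)
    (hzero : ∀ b' ∈ π.parts,
      (∀ y ∈ b', 0 < (y - i).val ∧ (y - i).val < (l - i).val) →
        ∑ x ∈ b', stepN d x.val = 0) :
    phiN d l.val = phiN d (i.val + 1) := by
  classical
  have hN0 : 0 < N := i.pos
  set ul := (l - i).val with hul
  have hul0 : 0 < ul := by
    have hvi : l.val ≠ i.val := fun h => hli (Fin.val_injective h)
    have := i.isLt
    rcases subval_cases l i with ⟨c, e⟩ | ⟨c, e⟩ <;> omega
  have hulN : ul < N := (l - i).isLt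
  set G : Finset (Fin N) :=
    Finset.univ.filter (fun x => 0 < (x - i).val ∧ (x - i).val < ul) with hG
  -- Step 1 : each part is inside G or disjoint from it
  have hsplit : ∀ b' ∈ π.parts, b' ∩ G = b' ∨ b' ∩ G = ∅ := by
    intro b' hb'
    by_cases hex : ∃ x ∈ b', 0 < (x - i).val ∧ (x - i).val < ul
    · left
      obtain ⟨x, hx, hx0, hxl⟩ := hex
      apply Finset.inter_eq_left.mpr
      intro y hy
      rw [hG, Finset.mem_filter]
      exact ⟨Finset.mem_univ _, gap_blocks hnc hb hib hlb hmin hb' hx hx0 hxl y hy⟩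
    · right
      push_neg at hex
      rw [Finset.eq_empty_iff_forall_notMem]
      intro y hy
      rw [Finset.mem_inter, hG, Finset.mem_filter] at hy
      obtain ⟨hy1, -, hy2, hy3⟩ := hy
      exact absurd hy3 (by have := hex y hy1; omega)
  -- Step 2 : the sum over G vanishes
  have hsum0 : ∑ x ∈ G, stepN d x.val = 0 := by
    have hGdecomp : G = π.parts.biUnion (fun b' => b' ∩ G) := by
      ext y
      simp only [Finset.mem_biUnion, Finset.mem_inter]
      constructor
      · intro hyG
        obtain ⟨t, ht, hyt⟩ := π.exists_mem (Finset.mem_univ y)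
        exact ⟨t, ht, hyt, hyG⟩
      · rintro ⟨t, ht, -, hyG⟩
        exact hyG
    rw [hGdecomp, Finset.sum_biUnion]
    · apply Finset.sum_eq_zero
      intro b' hb'
      rcases hsplit b' hb' with h | h
      · rw [h]
        apply hzero b' hb'
        intro y hy
        have : y ∈ b' ∩ G := h.symm ▸ hy
        rw [Finset.mem_inter, hG, Finset.mem_filter] at this
        exact ⟨this.2.2.1, this.2.2.2⟩
      · rw [h, Finset.sum_empty]
    · intro s hs t ht hst
      exact Disjoint.mono Finset.inter_subset_left Finset.inter_subset_left
        (π.disjoint hs ht hst)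
  -- Step 3 : transfer to a sum over ℕ
  have htrans : ∑ x ∈ G, stepN d x.val
      = ∑ t ∈ Finset.Ico (i.val + 1) (i.val + ul), stepN d t := by
    apply Finset.sum_bij' (fun (x : Fin N) (_ : x ∈ G) => i.val + (x - i).val)
      (fun (t : ℕ) (_ : t ∈ Finset.Ico (i.val + 1) (i.val + ul)) => (⟨t % N, Nat.mod_lt _ hN0⟩ : Fin N))
    · -- membership forward
      intro x hxG
      rw [hG, Finset.mem_filter] at hxG
      rw [Finset.mem_Ico]
      omega
    · -- membership backward
      intro t htI
      rw [Finset.mem_Ico] at htI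
      rw [hG, Finset.mem_filter]
      refine ⟨Finset.mem_univ _, ?_⟩
      have hiN := i.isLt
      have hval : ((⟨t % N, Nat.mod_lt _ hN0⟩ : Fin N) : ℕ) = t % N := rfl
      rcases Nat.lt_or_ge t N with h | h
      · have hmod : t % N = t := Nat.mod_eq_of_lt h
        rcases subval_cases (⟨t % N, Nat.mod_lt _ hN0⟩ : Fin N) i with ⟨c, e⟩ | ⟨c, e⟩ <;>
          rw [e] <;> rw [hval, hmod] at c ⊢ <;> omega
      · have hmod : t % N = t - N := by
          rw [Nat.mod_eq_sub_mod h, Nat.mod_eq_of_lt (by omega)]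
        rcases subval_cases (⟨t % N, Nat.mod_lt _ hN0⟩ : Fin N) i with ⟨c, e⟩ | ⟨c, e⟩ <;>
          rw [e] <;> rw [hval, hmod] at c ⊢ <;> omega
    · -- left inverse
      intro x hxG
      apply Fin.val_injective
      simp only
      have hiN := i.isLt; have hxN := x.isLt
      rcases subval_cases x i with ⟨c, e⟩ | ⟨c, e⟩
      · rw [e]; rw [Nat.mod_eq_of_lt (by omega)]; omega
      · rw [e]
        have : i.val + (x.val + N - i.val) = x.val + N := by omega
        rw [this, Nat.add_mod_right, Nat.mod_eq_of_lt hxN]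
    · -- right inverse
      intro t htI
      rw [Finset.mem_Ico] at htI
      have hiN := i.isLt
      have hval : ((⟨t % N, Nat.mod_lt _ hN0⟩ : Fin N) : ℕ) = t % N := rfl
      rcases Nat.lt_or_ge t N with h | h
      · have hmod : t % N = t := Nat.mod_eq_of_lt h
        rcases subval_cases (⟨t % N, Nat.mod_lt _ hN0⟩ : Fin N) i with ⟨c, e⟩ | ⟨c, e⟩ <;>
          rw [e] <;> rw [hval, hmod] at c ⊢ <;> omega
      · have hmod : t % N = t - N := by
          rw [Nat.mod_eq_sub_mod h, Nat.mod_eq_of_lt (by omega)]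
        rcases subval_cases (⟨t % N, Nat.mod_lt _ hN0⟩ : Fin N) i with ⟨c, e⟩ | ⟨c, e⟩ <;>
          rw [e] <;> rw [hval, hmod] at c ⊢ <;> omega
    · -- values agree
      intro x hxG
      rcases subval_cases x i with ⟨c, e⟩ | ⟨c, e⟩
      · rw [e]
        congr 1
        omega
      · rw [e]
        have h1 : i.val + (x.val + N - i.val) = x.val + N := by omega
        have h2 : x.val + N = x.val + 2 * d * m := congrArg (fun z => x.val + z) hN
        rw [h1, h2, stepN_period d m hd]
  have htel : ∑ t ∈ Finset.Ico (i.val + 1) (i.val + ul), stepN d t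
      = phiN d (i.val + ul) - phiN d (i.val + 1) := telescope d hd _ _ (by omega)
  have hend : phiN d (i.val + ul) = phiN d l.val := by
    rcases subval_cases l i with ⟨c, e⟩ | ⟨c, e⟩
    · rw [hul, e]
      congr 1
      omega
    · rw [hul, e]
      have h1 : i.val + (l.val + N - i.val) = l.val + N := by omega
      have h2 : l.val + N = l.val + 2 * d * m := congrArg (fun z => l.val + z) hN
      rw [h1, h2, phiN_period d m hd]
  have hfin := hsum0
  rw [htrans, htel, hend] at hfin
  linarith


lemma label_phi (d : ℕ) (hd : 0 < d) (n : ℕ) :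
    2 * (label d n : ℤ) + 1 = phiN d n + phiN d (n + 1) := by
  rw [phiN_succ d hd n]
  have hr : n % d < d := Nat.mod_lt _ hd
  unfold label phiN stepN
  by_cases h2 : (n / d) % 2 = 0 <;> simp [h2] <;> push_cast [*] <;> omega

lemma succ_exists {N : ℕ} {B : Finset (Fin N)} {k : Fin N} (hk : k ∈ B) :
    ∃ l, IsCyclicSuccIn B k l := by
  classical
  by_cases h : ∃ y ∈ B, y ≠ k
  · obtain ⟨y, hy, hyk⟩ := h
    obtain ⟨l, hl, hlmin⟩ := Finset.exists_min_image (B.filter (fun x => x ≠ k))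
      (fun x => (x - k).val) ⟨y, Finset.mem_filter.mpr ⟨hy, hyk⟩⟩
    rw [Finset.mem_filter] at hl
    exact ⟨l, hk, hl.1, Or.inr ⟨hl.2, fun x hx hxk => hlmin x (Finset.mem_filter.mpr ⟨hx, hxk⟩)⟩⟩
  · push_neg at h
    have hBk : B = {k} := Finset.eq_singleton_iff_unique_mem.mpr ⟨hk, h⟩
    exact ⟨k, hk, hk, Or.inl ⟨hBk, rfl⟩⟩

lemma block_sum_zero_of_flip {N d : ℕ} {π : Finpartition (Finset.univ : Finset (Fin N))}
    (H : ∀ b ∈ π.parts, ∀ i ∈ b, ∀ l, IsCyclicSuccIn b i l →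
      ((i : ℕ) / d) % 2 ≠ ((l : ℕ) / d) % 2)
    {b : Finset (Fin N)} (hb : b ∈ π.parts) (hcard : Even b.card) :
    ∑ x ∈ b, stepN d x.val = 0 := by
  classical
  rcases b.eq_empty_or_nonempty with rfl | ⟨z, hz⟩
  · simp
  set g : Fin N → Fin N := fun x => if h : ∃ w, IsCyclicSuccIn b x w then h.choose else x with hg
  have hspec : ∀ x ∈ b, IsCyclicSuccIn b x (g x) := by
    intro x hx
    have hex : ∃ w, IsCyclicSuccIn b x w := succ_exists hx
    rw [hg]
    simp only [dif_pos hex]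
    exact hex.choose_spec
  have hBne : ∀ z' : Fin N, b ≠ {z'} := by
    intro z' hzeq
    have hz' : z' ∈ b := by rw [hzeq]; exact Finset.mem_singleton_self z'
    exact H b hb z' hz' z' ⟨hz', hz', Or.inl ⟨hzeq, rfl⟩⟩ rfl
  apply blocksum b g (fun x hx => (hspec x hx).2.1) ?_ z ?_ hcard
  · intro x hx y hy hxy
    have h1 := hspec x hx
    rw [hxy] at h1
    exact succ_injOn hBne h1 (hspec y hy)
  · intro x hx _
    exact (H b hb x hx (g x) (hspec x hx)).symm

/-- A non-crossing partition `π` of `[2dm]` with blocks of even cardinality belongs to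
`NC*(d,m)` — i.e. any two cyclically consecutive elements of a block lie in intervals
`J_k` of different parity — if and only if every block of `π` is contained in a single
label class `A_i`. -/
theorem memNCstar_iff_label (d m : ℕ) (hd : 0 < d) (hm : 0 < m)
    (π : Finpartition (Finset.univ : Finset (Fin (2 * d * m))))
    (hnc : IsNonCrossing π) (heven : ∀ b ∈ π.parts, Even b.card) :
    (∀ b ∈ π.parts, ∀ i ∈ b, ∀ l : Fin (2 * d * m),
        IsCyclicSuccIn b i l → ((i : ℕ) / d) % 2 ≠ ((l : ℕ) / d) % 2) ↔
      (∀ i j : Fin (2 * d * m), SameBlock π i j → label d i = label d j) := by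
  constructor
  · -- forward direction
    intro H
    suffices haux : ∀ n : ℕ, ∀ (p q : Fin (2 * d * m)) (b : Finset (Fin (2 * d * m))),
        b ∈ π.parts → p ∈ b → q ∈ b → p.val ≤ q.val → q.val - p.val ≤ n →
        label d p.val = label d q.val by
      rintro i j ⟨b, hb, hib, hjb⟩
      rcases Nat.le_total i.val j.val with h | h
      · exact haux _ i j b hb hib hjb h le_rfl
      · exact (haux _ j i b hb hjb hib h le_rfl).symm
    intro n
    induction n with
    | zero =>
      intro p q b hb hp hq hle hn
      have : p = q := Fin.val_injective (by omega)
      rw [this]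
    | succ n ih =>
      intro p q b hb hp hq hle hn
      rcases Nat.eq_or_lt_of_le hle with heq | hlt
      · have : p = q := Fin.val_injective heq
        rw [this]
      by_cases hex : ∃ x ∈ b, p.val < x.val ∧ x.val < q.val
      · obtain ⟨x, hxb, h1, h2⟩ := hex
        exact (ih p x b hb hp hxb (by omega) (by omega)).trans
          (ih x q b hb hxb hq (by omega) (by omega))
      · push_neg at hex
        have hqp : q ≠ p := fun h => by rw [h] at hlt; omega
        have hmin : ∀ x ∈ b, x ≠ p → (q - p).val ≤ (x - p).val := by
          intro x hx hxp
          have h3 := hex x hx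
          have hxv : x.val ≠ p.val := fun h => hxp (Fin.val_injective h)
          have hq' := q.isLt
          rcases subval_cases q p with ⟨c1, e1⟩ | ⟨c1, e1⟩ <;>
            rcases subval_cases x p with ⟨c2, e2⟩ | ⟨c2, e2⟩ <;> omega
        have hsucc : IsCyclicSuccIn b p q := ⟨hp, hq, Or.inr ⟨hqp, hmin⟩⟩
        have hpar := H b hb p hp q hsucc
        have hphi : phiN d q.val = phiN d (p.val + 1) :=
          gap_sum hd rfl hnc hb hp hq hqp hmin
            (fun b' hb' _ => block_sum_zero_of_flip H hb' (heven b' hb'))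
        have l1 := label_phi d hd p.val
        have l2 := label_phi d hd q.val
        have hsp := phiN_succ d hd p.val
        have hsq := phiN_succ d hd q.val
        have hstep : stepN d q.val = - stepN d p.val := by
          unfold stepN
          by_cases h1 : (p.val / d) % 2 = 0 <;> by_cases h2 : (q.val / d) % 2 = 0 <;>
            simp [h1, h2] at hpar ⊢ <;> omega
        have hfin : (label d p.val : ℤ) = (label d q.val : ℤ) := by omega
        exact_mod_cast hfin
  · -- backward direction
    intro Hlab
    suffices haux : ∀ n : ℕ, ∀ b ∈ π.parts, ∀ p ∈ b, ∀ l : Fin (2 * d * m),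
        IsCyclicSuccIn b p l → (l - p).val ≤ n →
        ((p : ℕ) / d) % 2 ≠ ((l : ℕ) / d) % 2 by
      intro b hb i hib l hsucc
      exact haux _ b hb i hib l hsucc le_rfl
    intro n
    induction n with
    | zero =>
      intro b hb p hp l hsucc h0
      obtain ⟨-, -, hbr⟩ := hsucc
      rcases hbr with ⟨hbp, -⟩ | ⟨hne, -⟩
      · exfalso
        have := heven b hb
        rw [hbp] at this
        simp at this
      · exact absurd (u_zero (by omega)) hne
    | succ n ih =>
      intro b hb p hp l hsucc hn
      obtain ⟨-, hl, hbr⟩ := hsucc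
      rcases hbr with ⟨hbp, -⟩ | ⟨hne, hmin⟩
      · exfalso
        have := heven b hb
        rw [hbp] at this
        simp at this
      intro hpar
      have hphi : phiN d l.val = phiN d (p.val + 1) := by
        apply gap_sum hd rfl hnc hb hp hl hne hmin
        intro b' hb' hsub
        classical
        have hb'ne : b'.Nonempty := π.nonempty_of_mem_parts hb'
        obtain ⟨x₀, hx₀, hx₀max⟩ := Finset.exists_max_image b' (fun y => (y - p).val) hb'ne
        set g : Fin (2 * d * m) → Fin (2 * d * m) :=
          fun x => if h : ∃ w, IsCyclicSuccIn b' x w then h.choose else x with hg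
        have hspec : ∀ x ∈ b', IsCyclicSuccIn b' x (g x) := by
          intro x hx
          have hex : ∃ w, IsCyclicSuccIn b' x w := succ_exists hx
          rw [hg]
          simp only [dif_pos hex]
          exact hex.choose_spec
        have hBne : ∀ z' : Fin (2 * d * m), b' ≠ {z'} := by
          intro z' hzeq
          have := heven b' hb'
          rw [hzeq] at this
          simp at this
        apply blocksum b' g (fun x hx => (hspec x hx).2.1) ?_ x₀ ?_ (heven b' hb')
        · intro x hx y hy hxy
          have h1 := hspec x hx
          rw [hxy] at h1
          exact succ_injOn hBne h1 (hspec y hy)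
        · intro x hx hxx₀
          have hspecx := hspec x hx
          obtain ⟨-, hgxb, hbr'⟩ := hspecx
          rcases hbr' with ⟨hbp', -⟩ | ⟨hne', hmin'⟩
          · exact absurd hbp' (hBne x)
          have hux : (x - p).val < (x₀ - p).val := by
            rcases Nat.eq_or_lt_of_le (hx₀max x hx) with h | h
            · exact absurd (u_inj h.symm) (fun hh => hxx₀ hh.symm)
            · exact h
          have hgap : (g x - x).val ≤ n := by
            have h1 : (g x - x).val ≤ (x₀ - x).val := hmin' x₀ hx₀ (fun h => hxx₀ h.symm)
            have h2 : (x₀ - x).val = (x₀ - p).val - (x - p).val := u_diff hux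
            have h3 := hsub x₀ hx₀
            have h4 := hsub x hx
            omega
          exact fun hcon =>
            ih b' hb' x hx (g x) ⟨hx, hgxb, Or.inr ⟨hne', hmin'⟩⟩ hgap hcon.symm
      have hlabeq : label d p.val = label d l.val := Hlab p l ⟨b, hb, hp, hl⟩
      have l1 := label_phi d hd p.val
      have l2 := label_phi d hd l.val
      have hsp := phiN_succ d hd p.val
      have hsl := phiN_succ d hd l.val
      have hstep : stepN d l.val = stepN d p.val := by
        unfold stepN
        rw [← hpar]
      have hs1 : stepN d p.val = 1 ∨ stepN d p.val = -1 := by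
        unfold stepN
        split <;> simp
      have hcast : (label d p.val : ℤ) = (label d l.val : ℤ) := by exact_mod_cast hlabeq
      rcases hs1 with h | h <;> omega
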